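/- Let Y be a symmetric real 2×2 matrix with det Y = 1. Then the 3×3 matrix Φ₂₁(Y) is positive definite. (In the proof, the leading 2×2 principal minor of Φ₂₁(Y) is shown to equal 2y₂² + ½(y₁ − y₄)² + 1 > 0, where y₁, y₂, y₂, y₄ are the entries of Y.) -/

import Mathlib

open Matrix

/-- The covering map `Φ₂₁ : SL(2,ℝ) → SO⁺(2,1)`, written out entrywise. -/
noncomputable def Phi21 (Y : Matrix (Fin 2) (Fin 2) ℝ) : Matrix (Fin 3) (Fin 3) ℝ :=
  let y₁ := Y 0 0
  let y₂ := Y 0 1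
  let y₃ := Y 1 0
  let y₄ := Y 1 1
  !![1 + 2*y₂*y₃, y₂*y₄ - y₁*y₃, -(y₁*y₃ + y₂*y₄);
     y₃*y₄ - y₁*y₂, (y₁^2 - y₂^2 - y₃^2 + y₄^2)/2, (y₁^2 + y₂^2 - y₃^2 - y₄^2)/2;
     -(y₁*y₂ + y₃*y₄), (y₁^2 - y₂^2 + y₃^2 - y₄^2)/2, (y₁^2 + y₂^2 + y₃^2 + y₄^2)/2]

/-- The indefinite form matrix `I_{2,1} = diag(1,1,−1)`. -/
def I21 : Matrix (Fin 3) (Fin 3) ℝ := Matrix.diagonal ![1, 1, -1]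

/-- Key positivity lemma for the quadratic form of `Φ₂₁(Y)` when `Y` is symmetric
with determinant one. -/
lemma key_pos (y1 y2 y4 a b c Q : ℝ) (h : y1 * y4 - y2 ^ 2 = 1)
    (hx : ¬(a = 0 ∧ b = 0 ∧ c = 0))
    (hQ : Q = a * (a * (1 + 2*y2*y2) + b * (y2*y4 - y1*y2) + c * (-(y1*y2 + y2*y4)))
      + b * (a * (y2*y4 - y1*y2) + b * ((y1^2 - y2^2 - y2^2 + y4^2)/2)
          + c * ((y1^2 - y2^2 + y2^2 - y4^2)/2))
      + c * (a * (-(y1*y2 + y2*y4)) + b * ((y1^2 + y2^2 - y2^2 - y4^2)/2)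
          + c * ((y1^2 + y2^2 + y2^2 + y4^2)/2))) :
    0 < Q := by
  obtain ⟨p, hp⟩ : ∃ p : ℝ, p = 1 + 2*y2^2 := ⟨_, rfl⟩
  obtain ⟨d, hd⟩ : ∃ d : ℝ, d = y1^2/2 + y2^2 + y4^2/2 := ⟨_, rfl⟩
  obtain ⟨L1, hL1⟩ : ∃ L : ℝ, L = p*a + (y2*y4 - y1*y2)*b - (y2*y4 + y1*y2)*c := ⟨_, rfl⟩
  obtain ⟨L2, hL2⟩ : ∃ L : ℝ, L = d*b + ((y1^2 - y4^2)/2)*c := ⟨_, rfl⟩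
  have hppos : (0:ℝ) < p := by nlinarith [sq_nonneg y2]
  have hdpos : (0:ℝ) < d := by nlinarith [sq_nonneg (y1 - y4), sq_nonneg y2]
  have hid : p * d * Q = d * L1^2 + L2^2 + p * c^2 := by
    rw [hQ, hp, hd, hL1, hL2, hp, hd]
    linear_combination (c^2 + c^2*y2^2 - c^2*y2^2*y4^2 - 2*c^2*y2^4 + c^2*y1*y4
      - c^2*y1^2*y2^2 + b^2*y2^2*y4^2 + 2*b^2*y2^4 + b^2*y1^2*y2^2) * h
  have hrhs : 0 < d * L1^2 + L2^2 + p * c^2 := by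
    rcases eq_or_ne c 0 with hc | hc
    · rcases eq_or_ne b 0 with hb | hb
      · have ha : a ≠ 0 := fun h0 => hx ⟨h0, hb, hc⟩
        have hL1' : L1 = p * a := by rw [hL1, hb, hc]; ring
        have h1 : 0 < d * L1^2 := by rw [hL1']; positivity
        nlinarith [sq_nonneg L2, sq_nonneg c]
      · have hL2' : L2 = d * b := by rw [hL2, hc]; ring
        have h1 : 0 < L2^2 := by rw [hL2']; positivity
        nlinarith [sq_nonneg L1, sq_nonneg c, mul_nonneg hdpos.le (sq_nonneg L1)]
    · have h1 : 0 < p * c^2 := by positivity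
      nlinarith [sq_nonneg L2, mul_nonneg hdpos.le (sq_nonneg L1)]
  nlinarith [mul_pos hppos hdpos, hid, hrhs]

theorem stmt_6 (Y : Matrix (Fin 2) (Fin 2) ℝ) (hsym : Yᵀ = Y) (hY : Y.det = 1) :
    (Phi21 Y).PosDef := by
  have hs : Y 1 0 = Y 0 1 := (congrFun (congrFun hsym 1) 0).symm
  have hdet : Y 0 0 * Y 1 1 - Y 0 1 ^ 2 = 1 := by
    rw [Matrix.det_fin_two, hs] at hY
    nlinarith [hY]
  refine Matrix.posDef_iff_dotProduct_mulVec.mpr ⟨?_, ?_⟩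
  · show (Phi21 Y)ᴴ = Phi21 Y
    ext i j
    fin_cases i <;> fin_cases j <;>
      simp [Phi21, hs]
  · intro x hx
    have hx' : ¬(x 0 = 0 ∧ x 1 = 0 ∧ x 2 = 0) := by
      rintro ⟨h0, h1, h2⟩
      apply hx
      ext i
      fin_cases i <;> simp [h0, h1, h2]
    have key := key_pos (Y 0 0) (Y 0 1) (Y 1 1) (x 0) (x 1) (x 2)
      (x 0 * (x 0 * (1 + 2*(Y 0 1)*(Y 0 1)) + x 1 * ((Y 0 1)*(Y 1 1) - (Y 0 0)*(Y 0 1))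
          + x 2 * (-((Y 0 0)*(Y 0 1) + (Y 0 1)*(Y 1 1))))
        + x 1 * (x 0 * ((Y 0 1)*(Y 1 1) - (Y 0 0)*(Y 0 1))
          + x 1 * (((Y 0 0)^2 - (Y 0 1)^2 - (Y 0 1)^2 + (Y 1 1)^2)/2)
          + x 2 * (((Y 0 0)^2 - (Y 0 1)^2 + (Y 0 1)^2 - (Y 1 1)^2)/2))
        + x 2 * (x 0 * (-((Y 0 0)*(Y 0 1) + (Y 0 1)*(Y 1 1)))
          + x 1 * (((Y 0 0)^2 + (Y 0 1)^2 - (Y 0 1)^2 - (Y 1 1)^2)/2)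
          + x 2 * (((Y 0 0)^2 + (Y 0 1)^2 + (Y 0 1)^2 + (Y 1 1)^2)/2)))
      hdet hx' rfl
    have hform : star x ⬝ᵥ (Phi21 Y) *ᵥ x
        = x 0 * (x 0 * (1 + 2*(Y 0 1)*(Y 0 1)) + x 1 * ((Y 0 1)*(Y 1 1) - (Y 0 0)*(Y 0 1))
          + x 2 * (-((Y 0 0)*(Y 0 1) + (Y 0 1)*(Y 1 1))))
        + x 1 * (x 0 * ((Y 0 1)*(Y 1 1) - (Y 0 0)*(Y 0 1))
          + x 1 * (((Y 0 0)^2 - (Y 0 1)^2 - (Y 0 1)^2 + (Y 1 1)^2)/2)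
          + x 2 * (((Y 0 0)^2 - (Y 0 1)^2 + (Y 0 1)^2 - (Y 1 1)^2)/2))
        + x 2 * (x 0 * (-((Y 0 0)*(Y 0 1) + (Y 0 1)*(Y 1 1)))
          + x 1 * (((Y 0 0)^2 + (Y 0 1)^2 - (Y 0 1)^2 - (Y 1 1)^2)/2)
          + x 2 * (((Y 0 0)^2 + (Y 0 1)^2 + (Y 0 1)^2 + (Y 1 1)^2)/2)) := by
      simp [Phi21, Matrix.mulVec, dotProduct, Fin.sum_univ_three, hs]
      ring
    rw [hform]
    exact key
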